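/- Let k ∈ ℤ₊ and p, p₁, p₂ ∈ [0,1] be such that pk, p₁k, p₂k are integers and p ≥ p₁p₂. Let X^{(1)},…,X^{(k)} ∈ {0,1}² be i.i.d. random vectors. Then, conditioned on the events ∑_{i∈[k]} X^{(i)} = (p₁k, p₂k) and ∑_{i∈[k]} X^{(i)}_1 X^{(i)}_2 = pk, the probability that for all l ≤ k the prefix sums satisfy ∑_{i∈[l]} X^{(i)} ≥ (p₁l, p₂l) coordinatewise is at least k^{-3}. -/

import Mathlib

open scoped BigOperators
open MeasureTheory

namespace PrefixAux


variable {n : ℕ}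

/-- periodic extension of a word to ℕ -/
def extw (w : Fin n → Bool) (i : ℕ) : Bool :=
  if h : 0 < n then w ⟨i % n, Nat.mod_lt _ h⟩ else false

lemma extw_fin (w : Fin n → Bool) (i : Fin n) : extw w i.val = w i := by
  have h : 0 < n := i.pos
  simp only [extw, dif_pos h]
  congr 1
  exact Fin.ext (Nat.mod_eq_of_lt i.isLt)

lemma extw_zero_len (w : Fin 0 → Bool) (i : ℕ) : extw w i = false := by
  simp [extw]

lemma extw_periodic (w : Fin n → Bool) : Function.Periodic (extw w) n := by
  intro x
  by_cases h : 0 < n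
  · simp only [extw, dif_pos h]
    congr 1
    exact Fin.ext (by simp [Nat.add_mod_right])
  · simp only [extw, dif_neg h]

lemma extw_mod (w : Fin n → Bool) (i : ℕ) : extw w (i % n) = extw w i :=
  (extw_periodic w).map_mod_nat i

lemma extw_add_mul (w : Fin n → Bool) (i q : ℕ) : extw w (i + n * q) = extw w i := by
  induction q with
  | zero => simp
  | succ q ih =>
    have : i + n * (q + 1) = (i + n * q) + n := by ring
    rw [this, extw_periodic w, ih]

/-- prefix count of ones -/
def cnt (w : Fin n → Bool) (l : ℕ) : ℕ :=
  ((Finset.range l).filter fun i => extw w i = true).card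

/-- rotation of a word -/
def rotw (r : ℕ) (w : Fin n → Bool) : Fin n → Bool :=
  fun i => extw w (i.val + r)

lemma extw_rotw (w : Fin n → Bool) (r x : ℕ) :
    extw (rotw r w) x = extw w (x + r) := by
  by_cases h : 0 < n
  · simp only [extw, dif_pos h, rotw]
    congr 1
    exact Fin.ext (by simp [Nat.add_mod])
  · simp only [extw, dif_neg h]

lemma cnt_zero (w : Fin n → Bool) : cnt w 0 = 0 := by simp [cnt]

lemma cnt_succ (w : Fin n → Bool) (l : ℕ) :
    cnt w (l + 1) = cnt w l + (if extw w l then 1 else 0) := by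
  simp only [cnt, Finset.range_add_one, Finset.filter_insert]
  by_cases h : extw w l = true
  · rw [if_pos h, Finset.card_insert_of_notMem (by simp), if_pos h]
  · rw [if_neg h, if_neg h, add_zero]

lemma cnt_le (w : Fin n → Bool) (l : ℕ) : cnt w l ≤ l := by
  calc cnt w l ≤ (Finset.range l).card := Finset.card_filter_le _ _
  _ = l := Finset.card_range l

lemma cnt_mono (w : Fin n → Bool) {l l' : ℕ} (h : l ≤ l') : cnt w l ≤ cnt w l' :=
  Finset.card_le_card (Finset.filter_subset_filter _ (Finset.range_subset_range.2 h))

lemma cnt_shift_add (w : Fin n → Bool) (r l : ℕ) :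
    cnt w (r + l) = cnt w r + cnt (rotw r w) l := by
  induction l with
  | zero => simp [cnt_zero]
  | succ l ih =>
    rw [show r + (l + 1) = (r + l) + 1 from rfl, cnt_succ, ih, cnt_succ,
      extw_rotw, add_comm l r, add_assoc]

lemma cnt_period (w : Fin n → Bool) (l : ℕ) : cnt w (n + l) = cnt w n + cnt w l := by
  induction l with
  | zero => simp [cnt_zero]
  | succ l ih =>
    rw [show n + (l + 1) = (n + l) + 1 from rfl, cnt_succ, ih, cnt_succ,
      add_comm n l, extw_periodic w, add_assoc]

lemma cnt_rot_total (w : Fin n → Bool) (r : ℕ) : cnt (rotw r w) n = cnt w n := by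
  have h1 := cnt_shift_add w r n
  rw [add_comm] at h1
  have h2 := cnt_period w r
  omega

lemma cnt_congr {n' : ℕ} (w : Fin n → Bool) (w' : Fin n' → Bool)
    (h : ∀ x, extw w x = extw w' x) (l : ℕ) : cnt w l = cnt w' l := by
  unfold cnt
  congr 1
  exact Finset.filter_congr fun x _ => by rw [h]

/-- cycle lemma -/
lemma cycle (w : Fin n → Bool) :
    ∃ r < max n 1, ∀ l, cnt w n * l ≤ n * cnt (rotw r w) l := by
  by_cases hn : 0 < n
  · set f : ℕ → ℤ := fun l => (n : ℤ) * cnt w l - (cnt w n : ℤ) * l with hf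
    have hper : Function.Periodic f n := by
      intro x
      have : cnt w (x + n) = cnt w n + cnt w x := by rw [add_comm, cnt_period]
      simp only [hf, this]
      push_cast
      ring
    obtain ⟨r, hr, hmin⟩ := Finset.exists_min_image (Finset.range n) f ⟨0, by simpa using hn⟩
    refine ⟨r, by simp at hr; omega, fun l => ?_⟩
    have hfl : f r ≤ f (r + l) := by
      rw [← hper.map_mod_nat (r + l)]
      exact hmin _ (Finset.mem_range.2 (Nat.mod_lt _ hn))
    have hsplit : cnt w (r + l) = cnt w r + cnt (rotw r w) l := cnt_shift_add w r l
    simp only [hf, hsplit] at hfl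
    push_cast at hfl
    have : (cnt w n : ℤ) * l ≤ (n : ℤ) * cnt (rotw r w) l := by linarith
    exact_mod_cast this
  · refine ⟨0, by omega, fun l => ?_⟩
    have : n = 0 := by omega
    subst this
    simp [cnt_zero]



/-- index of an element in a finset equals number of smaller elements -/
lemma idx_val {α : Type*} [LinearOrder α] (s : Finset α) (x : α) (hx : x ∈ s) :
    (((s.orderIsoOfFin rfl).symm ⟨x, hx⟩ : Fin s.card) : ℕ)
      = (s.filter fun z => z < x).card := by
  set e := s.orderIsoOfFin rfl with he
  set j := e.symm ⟨x, hx⟩ with hj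
  have hx' : e j = ⟨x, hx⟩ := e.apply_symm_apply _
  symm
  rw [show (j : ℕ) = (Finset.range (j : ℕ)).card from (Finset.card_range _).symm]
  apply Finset.card_bij (fun z hz => ((e.symm ⟨z, (Finset.mem_filter.1 hz).1⟩ : Fin s.card) : ℕ))
  · intro z hz
    have hzx : z < x := (Finset.mem_filter.1 hz).2
    have : e.symm ⟨z, (Finset.mem_filter.1 hz).1⟩ < j := by
      rw [hj]
      exact e.symm.strictMono (Subtype.mk_lt_mk.2 hzx)
    simpa using this
  · intro z₁ hz₁ z₂ hz₂ hzz
    have := e.symm.injective (Fin.ext hzz)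
    exact congrArg Subtype.val this
  · intro i hi
    have hij : i < (j : ℕ) := Finset.mem_range.1 hi
    have hilt : i < s.card := lt_of_lt_of_le hij (Nat.le_of_lt_succ (Nat.lt_succ_of_lt j.isLt))
    refine ⟨(e ⟨i, hilt⟩ : α), ?_, ?_⟩
    · refine Finset.mem_filter.2 ⟨(e ⟨i, hilt⟩).2, ?_⟩
      have : e ⟨i, hilt⟩ < e j := e.strictMono (by exact Fin.mk_lt_of_lt_val hij)
      rw [hx'] at this
      exact this
    · have : e.symm ⟨(e ⟨i, hilt⟩ : α), (e ⟨i, hilt⟩).2⟩ = ⟨i, hilt⟩ := by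
        rw [show (⟨(e ⟨i, hilt⟩ : α), (e ⟨i, hilt⟩).2⟩ : {z // z ∈ s}) = e ⟨i, hilt⟩ from rfl]
        exact e.symm_apply_apply _
      rw [this]

/-- cancel a shift in extw-equality -/
lemma extw_shift_cancel {n n' : ℕ} (w : Fin n → Bool) (w' : Fin n' → Bool) (s : ℕ)
    (hnn : n' = n) (h : ∀ x, extw w (x + s) = extw w' (x + s)) :
    ∀ x, extw w x = extw w' x := by
  intro x
  by_cases hn : 0 < n
  · have h1 : extw w (x + n * s) = extw w x := extw_add_mul w x s
    have h2 : extw w' (x + n * s) = extw w' x := by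
      rw [← hnn]
      exact extw_add_mul w' x s
    have hns : s ≤ x + n * s :=
      le_trans (Nat.le_mul_of_pos_left s hn) (Nat.le_add_left _ _)
    have hxx : (x + n * s - s) + s = x + n * s := by omega
    rw [← h1, ← h2, ← hxx]
    exact h _
  · have hn0 : n = 0 := by omega
    subst hn0
    subst hnn
    rw [extw_zero_len, extw_zero_len]

lemma extw_inj {w w' : Fin n → Bool} (h : ∀ x, extw w x = extw w' x) : w = w' := by
  funext j
  rw [← extw_fin w j, ← extw_fin w' j, h]

lemma rotw_inj (r : ℕ) {w w' : Fin n → Bool} (h : rotw r w = rotw r w') : w = w' := by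
  apply extw_inj
  apply extw_shift_cancel w w' r rfl
  intro x
  rw [← extw_rotw w r x, ← extw_rotw w' r x, h]

section Seq
variable {k : ℕ}

def pos (yy : Fin k → Bool) : Finset (Fin k) := Finset.univ.filter fun i => yy i = true
def neg (yy : Fin k → Bool) : Finset (Fin k) := Finset.univ.filter fun i => yy i = false

lemma mem_pos {yy : Fin k → Bool} {i : Fin k} : i ∈ pos yy ↔ yy i = true := by
  simp [pos]
lemma mem_neg {yy : Fin k → Bool} {i : Fin k} : i ∈ neg yy ↔ yy i = false := by
  simp [neg]
lemma mem_neg_of_not_pos {yy : Fin k → Bool} {i : Fin k} (h : i ∉ pos yy) : i ∈ neg yy := by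
  rw [mem_pos] at h; rw [mem_neg]; exact Bool.not_eq_true _ ▸ (by simpa using h)

def yw (ω : Fin k → Bool × Bool) : Fin k → Bool := fun i => (ω i).1

noncomputable def uw (ω : Fin k → Bool × Bool) : Fin (pos (yw ω)).card → Bool :=
  fun j => (ω (((pos (yw ω)).orderIsoOfFin rfl j : {x // x ∈ pos (yw ω)}) : Fin k)).2

noncomputable def vw (ω : Fin k → Bool × Bool) : Fin (neg (yw ω)).card → Bool :=
  fun j => (ω (((neg (yw ω)).orderIsoOfFin rfl j : {x // x ∈ neg (yw ω)}) : Fin k)).2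

/-- second coordinate at a positive position, via the u-word -/
lemma snd_eq_uw (ω : Fin k → Bool × Bool) (i : Fin k) (h : i ∈ pos (yw ω)) :
    (ω i).2 = extw (uw ω) ((((pos (yw ω)).orderIsoOfFin rfl).symm ⟨i, h⟩ : Fin _) : ℕ) := by
  set e := (pos (yw ω)).orderIsoOfFin rfl
  set j := e.symm ⟨i, h⟩
  rw [extw_fin (uw ω) j]
  show (ω i).2 = (ω ((e j : {x // x ∈ pos (yw ω)}) : Fin k)).2
  have : e j = ⟨i, h⟩ := e.apply_symm_apply _
  rw [this]

lemma snd_eq_vw (ω : Fin k → Bool × Bool) (i : Fin k) (h : i ∈ neg (yw ω)) :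
    (ω i).2 = extw (vw ω) ((((neg (yw ω)).orderIsoOfFin rfl).symm ⟨i, h⟩ : Fin _) : ℕ) := by
  set e := (neg (yw ω)).orderIsoOfFin rfl
  set j := e.symm ⟨i, h⟩
  rw [extw_fin (vw ω) j]
  show (ω i).2 = (ω ((e j : {x // x ∈ neg (yw ω)}) : Fin k)).2
  have : e j = ⟨i, h⟩ := e.apply_symm_apply _
  rw [this]

lemma idx_congr (Y Y' : Fin k → Bool) (h : Y = Y') (i : Fin k) (hi : i ∈ pos Y)
    (hi' : i ∈ pos Y') :
    ((((pos Y).orderIsoOfFin rfl).symm ⟨i, hi⟩ : Fin _) : ℕ)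
      = ((((pos Y').orderIsoOfFin rfl).symm ⟨i, hi'⟩ : Fin _) : ℕ) := by
  subst h; rfl

lemma idx_congr' (Y Y' : Fin k → Bool) (h : Y = Y') (i : Fin k) (hi : i ∈ neg Y)
    (hi' : i ∈ neg Y') :
    ((((neg Y).orderIsoOfFin rfl).symm ⟨i, hi⟩ : Fin _) : ℕ)
      = ((((neg Y').orderIsoOfFin rfl).symm ⟨i, hi'⟩ : Fin _) : ℕ) := by
  subst h; rfl

/-- a sequence is determined by its y-word and the extensions of u- and v-words -/
lemma seq_det {ω ω' : Fin k → Bool × Bool} (h1 : yw ω = yw ω')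
    (h2 : ∀ x, extw (uw ω) x = extw (uw ω') x)
    (h3 : ∀ x, extw (vw ω) x = extw (vw ω') x) : ω = ω' := by
  funext i
  have hfst : (ω i).1 = (ω' i).1 := congrFun h1 i
  refine Prod.ext hfst ?_
  by_cases h : i ∈ pos (yw ω)
  · have h' : i ∈ pos (yw ω') := by rwa [← h1]
    rw [snd_eq_uw ω i h, snd_eq_uw ω' i h', h2, idx_congr (yw ω) (yw ω') h1 i h h']
  · have hn : i ∈ neg (yw ω) := mem_neg_of_not_pos h
    have hn' : i ∈ neg (yw ω') := by rwa [← h1] at *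
    rw [snd_eq_vw ω i hn, snd_eq_vw ω' i hn', h3, idx_congr' (yw ω) (yw ω') h1 i hn hn']

/-- assembly -/
noncomputable def asm (yy : Fin k → Bool) (U V : ℕ → Bool) : Fin k → Bool × Bool :=
  fun i => (yy i,
    if h : i ∈ pos yy then U ((((pos yy).orderIsoOfFin rfl).symm ⟨i, h⟩ : Fin _) : ℕ)
    else V ((((neg yy).orderIsoOfFin rfl).symm ⟨i, mem_neg_of_not_pos h⟩ : Fin _) : ℕ))

lemma yw_asm (yy : Fin k → Bool) (U V : ℕ → Bool) : yw (asm yy U V) = yy := rfl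

lemma pos_asm (yy : Fin k → Bool) (U V : ℕ → Bool) : pos (yw (asm yy U V)) = pos yy := rfl
lemma neg_asm (yy : Fin k → Bool) (U V : ℕ → Bool) : neg (yw (asm yy U V)) = neg yy := rfl

lemma uw_asm (yy : Fin k → Bool) (U V : ℕ → Bool) (j : Fin (pos (yw (asm yy U V))).card) :
    uw (asm yy U V) j = U (j : ℕ) := by
  set e := (pos yy).orderIsoOfFin rfl with he
  show (asm yy U V ((e j : {x // x ∈ pos yy}) : Fin k)).2 = U (j : ℕ)
  have hmem : ((e j : {x // x ∈ pos yy}) : Fin k) ∈ pos yy := (e j).2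
  show (if h : _ then U _ else V _) = U (j : ℕ)
  rw [dif_pos hmem]
  congr 1
  have : e.symm ⟨((e j : {x // x ∈ pos yy}) : Fin k), hmem⟩ = j := by
    rw [show (⟨((e j : {x // x ∈ pos yy}) : Fin k), hmem⟩ : {x // x ∈ pos yy}) = e j from rfl]
    exact e.symm_apply_apply _
  rw [this]

lemma vw_asm (yy : Fin k → Bool) (U V : ℕ → Bool) (j : Fin (neg (yw (asm yy U V))).card) :
    vw (asm yy U V) j = V (j : ℕ) := by
  set e := (neg yy).orderIsoOfFin rfl with he
  show (asm yy U V ((e j : {x // x ∈ neg yy}) : Fin k)).2 = V (j : ℕ)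
  have hmem : ((e j : {x // x ∈ neg yy}) : Fin k) ∈ neg yy := (e j).2
  have hnp : ((e j : {x // x ∈ neg yy}) : Fin k) ∉ pos yy := by
    rw [mem_pos]
    rw [mem_neg] at hmem
    simp [hmem]
  show (if h : _ then U _ else V _) = V (j : ℕ)
  rw [dif_neg hnp]
  congr 1
  have : e.symm ⟨((e j : {x // x ∈ neg yy}) : Fin k), hmem⟩ = j := by
    rw [show (⟨((e j : {x // x ∈ neg yy}) : Fin k), hmem⟩ : {x // x ∈ neg yy}) = e j from rfl]
    exact e.symm_apply_apply _
  rw [this]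

end Seq

section Seq2
variable {k : ℕ}

lemma extw_lt {n : ℕ} (w : Fin n → Bool) {i : ℕ} (h : i < n) : extw w i = w ⟨i, h⟩ :=
  extw_fin w ⟨i, h⟩

lemma card_filter_lt {l : ℕ} (hl : l ≤ k) :
    (Finset.univ.filter fun z : Fin k => (z : ℕ) < l).card = l := by
  rw [← Finset.card_range l]
  symm
  apply Finset.card_bij (fun i hi => (⟨i, lt_of_lt_of_le (Finset.mem_range.1 hi) hl⟩ : Fin k))
  · intro i hi
    simp [Finset.mem_range.1 hi]
  · intro i₁ h₁ i₂ h₂ h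
    exact congrArg Fin.val h
  · intro z hz
    exact ⟨(z : ℕ), Finset.mem_range.2 (by simpa using hz), Fin.ext rfl⟩

lemma cnt_eq_card (yy : Fin k → Bool) {l : ℕ} (hl : l ≤ k) :
    cnt yy l = ((pos yy).filter fun z : Fin k => (z : ℕ) < l).card := by
  unfold cnt
  apply Finset.card_bij (fun i hi => (⟨i, lt_of_lt_of_le (Finset.mem_range.1 (Finset.mem_filter.1 hi).1) hl⟩ : Fin k))
  · intro i hi
    obtain ⟨hir, hiw⟩ := Finset.mem_filter.1 hi
    have hik : i < k := lt_of_lt_of_le (Finset.mem_range.1 hir) hl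
    refine Finset.mem_filter.2 ⟨mem_pos.2 ?_, by simpa using Finset.mem_range.1 hir⟩
    rwa [extw_lt yy hik] at hiw
  · intro i₁ h₁ i₂ h₂ h
    exact congrArg Fin.val h
  · intro z hz
    obtain ⟨hzp, hzl⟩ := Finset.mem_filter.1 hz
    refine ⟨(z : ℕ), Finset.mem_filter.2 ⟨Finset.mem_range.2 hzl, ?_⟩, Fin.ext rfl⟩
    rw [extw_fin yy z]
    exact mem_pos.1 hzp

lemma card_pos_eq (yy : Fin k → Bool) : cnt yy k = (pos yy).card := by
  rw [cnt_eq_card yy (le_refl k)]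
  congr 1
  apply Finset.filter_true_of_mem
  intro z _
  exact z.isLt

lemma pos_neg_filter_card (yy : Fin k → Bool) {l : ℕ} (hl : l ≤ k) :
    ((pos yy).filter fun z : Fin k => (z : ℕ) < l).card
      + ((neg yy).filter fun z : Fin k => (z : ℕ) < l).card = l := by
  have key := Finset.card_filter_add_card_filter_not
    (s := Finset.univ.filter fun z : Fin k => (z : ℕ) < l) (p := fun z => yy z = true)
  rw [card_filter_lt hl] at key
  have e1 : (Finset.univ.filter fun z : Fin k => (z : ℕ) < l).filter (fun z => yy z = true)
      = (pos yy).filter fun z : Fin k => (z : ℕ) < l := by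
    ext z
    simp only [pos, Finset.mem_filter, Finset.mem_univ, true_and]
    try tauto
  have e2 : (Finset.univ.filter fun z : Fin k => (z : ℕ) < l).filter (fun z => ¬ yy z = true)
      = (neg yy).filter fun z : Fin k => (z : ℕ) < l := by
    ext z
    simp only [neg, Finset.mem_filter, Finset.mem_univ, true_and, Bool.not_eq_true]
    try tauto
  rw [e1, e2] at key
  exact key

lemma neg_filter_card (yy : Fin k → Bool) {l : ℕ} (hl : l ≤ k) :
    ((neg yy).filter fun z : Fin k => (z : ℕ) < l).card = l - cnt yy l := by
  have := pos_neg_filter_card yy hl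
  rw [← cnt_eq_card yy hl] at this
  omega

lemma card_pos_add_card_neg (yy : Fin k → Bool) : (pos yy).card + (neg yy).card = k := by
  have h1 := card_pos_eq yy
  have h2 := neg_filter_card yy (le_refl k)
  have h3 : (neg yy).filter (fun z : Fin k => (z : ℕ) < k) = neg yy :=
    Finset.filter_true_of_mem fun z _ => z.isLt
  rw [h3] at h2
  have h4 := cnt_le yy k
  omega

/-- the key prefix-splitting identity -/
lemma cnt_split (ω : Fin k → Bool × Bool) {l : ℕ} (hl : l ≤ k) :
    cnt (fun i => (ω i).2) l
      = cnt (uw ω) (cnt (yw ω) l) + cnt (vw ω) (l - cnt (yw ω) l) := by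
  induction l with
  | zero => simp [cnt_zero]
  | succ l ih =>
    have hlk : l < k := hl
    have hll : l ≤ k := le_of_lt hlk
    specialize ih hll
    set i : Fin k := ⟨l, hlk⟩ with hi
    have hcle : cnt (yw ω) l ≤ l := cnt_le _ _
    have hz : extw (fun i => (ω i).2) l = (ω i).2 := extw_lt _ hlk
    have hy : extw (yw ω) l = (ω i).1 := extw_lt _ hlk
    by_cases hcase : (ω i).1 = true
    · have hipos : i ∈ pos (yw ω) := mem_pos.2 hcase
      have hidx : ((((pos (yw ω)).orderIsoOfFin rfl).symm ⟨i, hipos⟩ : Fin _) : ℕ)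
          = cnt (yw ω) l := by
        rw [idx_val (pos (yw ω)) i hipos, cnt_eq_card (yw ω) hll]
        congr 1
      have hcnl : cnt (yw ω) l < (pos (yw ω)).card := by
        rw [← hidx]
        exact Fin.isLt _
      have hkey : extw (uw ω) (cnt (yw ω) l) = (ω i).2 := by
        rw [← hidx, ← snd_eq_uw ω i hipos]
      have hy1 : cnt (yw ω) (l + 1) = cnt (yw ω) l + 1 := by
        rw [cnt_succ, hy, hcase]
        simp
      rw [cnt_succ, hz, ih, hy1, cnt_succ (uw ω), hkey]
      have : l + 1 - (cnt (yw ω) l + 1) = l - cnt (yw ω) l := by omega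
      rw [this]
      cases hb : (ω i).2 <;> simp <;> try omega
    · have hineg : i ∈ neg (yw ω) := mem_neg.2 (by simpa [yw] using hcase)
      have hidx : ((((neg (yw ω)).orderIsoOfFin rfl).symm ⟨i, hineg⟩ : Fin _) : ℕ)
          = l - cnt (yw ω) l := by
        rw [idx_val (neg (yw ω)) i hineg, ← neg_filter_card (yw ω) hll]
        congr 1
      have hcnl : l - cnt (yw ω) l < (neg (yw ω)).card := by
        rw [← hidx]
        exact Fin.isLt _
      have hkey : extw (vw ω) (l - cnt (yw ω) l) = (ω i).2 := by
        rw [← hidx, ← snd_eq_vw ω i hineg]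
      have hy1 : cnt (yw ω) (l + 1) = cnt (yw ω) l := by
        rw [cnt_succ, hy]
        simp [hcase]
      rw [cnt_succ, hz, ih, hy1, show l + 1 - cnt (yw ω) l = (l - cnt (yw ω) l) + 1 by omega,
        cnt_succ (vw ω), hkey]
      cases hb : (ω i).2 <;> simp <;> try omega
end Seq2


section Seq3
variable {k : ℕ}

/-- total ones in the u-word = number of double-ones -/
lemma uw_total (ω : Fin k → Bool × Bool) :
    cnt (uw ω) (pos (yw ω)).card = cnt (fun i => (ω i).1 && (ω i).2) k := by
  rw [card_pos_eq (uw ω), card_pos_eq (fun i => (ω i).1 && (ω i).2)]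
  set e := (pos (yw ω)).orderIsoOfFin rfl
  apply Finset.card_bij (fun j _ => ((e j : {x // x ∈ pos (yw ω)}) : Fin k))
  · intro j hj
    have h1 : (ω ((e j : {x // x ∈ pos (yw ω)}) : Fin k)).1 = true := mem_pos.1 (e j).2
    have h2 : (ω ((e j : {x // x ∈ pos (yw ω)}) : Fin k)).2 = true := mem_pos.1 hj
    rw [mem_pos, h1, h2]
    rfl
  · intro j₁ h₁ j₂ h₂ h
    exact e.injective (Subtype.ext h)
  · intro i hi
    have hi' := mem_pos.1 hi
    have h1 : (ω i).1 = true := by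
      cases h' : (ω i).1 <;> rw [h'] at hi' <;> simp at hi' ⊢
    have hip : i ∈ pos (yw ω) := mem_pos.2 h1
    refine ⟨e.symm ⟨i, hip⟩, ?_, ?_⟩
    · rw [mem_pos]
      show (ω ((e (e.symm ⟨i, hip⟩) : {x // x ∈ pos (yw ω)}) : Fin k)).2 = true
      rw [e.apply_symm_apply]
      cases h' : (ω i).2 <;> rw [h'] at hi' <;> simp at hi' ⊢
    · rw [e.apply_symm_apply]

/-- pointwise description of a word gives its periodic extension -/
lemma extw_ptwise {M M' : ℕ} (h : M = M') (w : Fin M → Bool) (w' : Fin M' → Bool) (s : ℕ)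
    (hp : ∀ j : Fin M', w' j = extw w ((j : ℕ) + s)) :
    ∀ x, extw w' x = extw w (x + s) := by
  subst h
  intro x
  by_cases hM : 0 < M
  · rw [← extw_mod w' x, extw_lt w' (Nat.mod_lt _ hM : x % M < M), hp]
    rw [← extw_mod w (x % M + s), ← extw_mod w (x + s)]
    congr 1
    simp [Nat.add_mod]
  · have h0 : M = 0 := by omega
    subst h0
    rw [extw_zero_len, extw_zero_len]

noncomputable def Tmap (r s t : ℕ) (ω : Fin k → Bool × Bool) : Fin k → Bool × Bool :=
  asm (rotw r (yw ω)) (fun x => extw (uw ω) (x + s)) (fun x => extw (vw ω) (x + t))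

lemma yw_Tmap (r s t : ℕ) (ω : Fin k → Bool × Bool) :
    yw (Tmap r s t ω) = rotw r (yw ω) := rfl

lemma card_pos_Tmap (r s t : ℕ) (ω : Fin k → Bool × Bool) :
    (pos (yw (Tmap r s t ω))).card = (pos (yw ω)).card := by
  rw [← card_pos_eq, ← card_pos_eq, yw_Tmap, cnt_rot_total]

lemma card_neg_Tmap (r s t : ℕ) (ω : Fin k → Bool × Bool) :
    (neg (yw (Tmap r s t ω))).card = (neg (yw ω)).card := by
  have h1 := card_pos_add_card_neg (yw (Tmap r s t ω))
  have h2 := card_pos_add_card_neg (yw ω)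
  have h3 := card_pos_Tmap r s t ω
  omega

lemma extw_uw_Tmap (r s t : ℕ) (ω : Fin k → Bool × Bool) (x : ℕ) :
    extw (uw (Tmap r s t ω)) x = extw (uw ω) (x + s) :=
  extw_ptwise (card_pos_Tmap r s t ω).symm (uw ω) (uw (Tmap r s t ω)) s
    (fun j => uw_asm _ _ _ j) x

lemma extw_vw_Tmap (r s t : ℕ) (ω : Fin k → Bool × Bool) (x : ℕ) :
    extw (vw (Tmap r s t ω)) x = extw (vw ω) (x + t) :=
  extw_ptwise (card_neg_Tmap r s t ω).symm (vw ω) (vw (Tmap r s t ω)) t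
    (fun j => vw_asm _ _ _ j) x

lemma cnt_uw_Tmap (r s t : ℕ) (ω : Fin k → Bool × Bool) (l : ℕ) :
    cnt (uw (Tmap r s t ω)) l = cnt (rotw s (uw ω)) l :=
  cnt_congr _ _ (fun x => by rw [extw_uw_Tmap, extw_rotw]) l

lemma cnt_vw_Tmap (r s t : ℕ) (ω : Fin k → Bool × Bool) (l : ℕ) :
    cnt (vw (Tmap r s t ω)) l = cnt (rotw t (vw ω)) l :=
  cnt_congr _ _ (fun x => by rw [extw_vw_Tmap, extw_rotw]) l

lemma Tmap_inj (r s t : ℕ) : Function.Injective (Tmap r s t : (Fin k → Bool × Bool) → _) := by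
  intro ω ω' h
  have hy : yw ω = yw ω' := by
    apply rotw_inj r
    rw [← yw_Tmap r s t ω, ← yw_Tmap r s t ω', h]
  have hu : ∀ x, extw (uw ω) x = extw (uw ω') x := by
    apply extw_shift_cancel (uw ω) (uw ω') s (by rw [hy])
    intro x
    rw [← extw_uw_Tmap r s t ω x, ← extw_uw_Tmap r s t ω' x, h]
  have hv : ∀ x, extw (vw ω) x = extw (vw ω') x := by
    apply extw_shift_cancel (vw ω) (vw ω') t (by rw [hy])
    intro x
    rw [← extw_vw_Tmap r s t ω x, ← extw_vw_Tmap r s t ω' x, h]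
  exact seq_det hy hu hv
end Seq3


lemma key_arith (M M' a b2 c c' U V : ℕ)
    (hcM : c ≤ M) (hc : a ≤ M) (hb : b2 ≤ M')
    (hU : a * c ≤ M * U) (hV : b2 * c' ≤ M' * V)
    (hMl : M * (c + c') ≤ (M + M') * c)
    (hco : M * (a + b2) ≤ a * (M + M')) :
    (a + b2) * (c + c') ≤ (M + M') * (U + V) := by
  rcases Nat.eq_zero_or_pos M with hM0 | hMpos
  · subst hM0
    have hc0 : c = 0 := by omega
    have ha0 : a = 0 := by omega
    subst hc0; subst ha0
    simp only [Nat.zero_add, zero_add] at *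
    calc b2 * c' ≤ M' * V := hV
    _ ≤ M' * (U + V) := Nat.mul_le_mul_left _ (by omega)
  rcases Nat.eq_zero_or_pos M' with hM'0 | hM'pos
  · subst hM'0
    have hb0 : b2 = 0 := by omega
    subst hb0
    have hc'0 : c' = 0 := by
      have : M * c + M * c' ≤ M * c := by
        calc M * c + M * c' = M * (c + c') := by ring
        _ ≤ (M + 0) * c := hMl
        _ = M * c := by ring
      have := Nat.eq_zero_of_le_zero (by omega : M * c' ≤ 0)
      exact (Nat.mul_eq_zero.1 this).resolve_left (by omega)
    subst hc'0
    simp only [Nat.add_zero, add_zero] at *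
    calc a * c ≤ M * U := hU
    _ ≤ M * (U + V) := Nat.mul_le_mul_left _ (by omega)
  -- main case
  zify at *
  have h1 : (M : ℤ) * c' ≤ M' * c := by nlinarith
  have h2 : (M : ℤ) * b2 ≤ M' * a := by nlinarith
  have hkey : (0:ℤ) ≤ ((M':ℤ) * c - M * c') * ((M':ℤ) * a - M * b2) :=
    mul_nonneg (by linarith) (by linarith)
  have hU' : (M':ℤ) * ((M:ℤ) + M') * (a * c) ≤ (M':ℤ) * ((M:ℤ) + M') * (M * U) := by
    apply mul_le_mul_of_nonneg_left hU
    positivity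
  have hV' : (M:ℤ) * ((M:ℤ) + M') * (b2 * c') ≤ (M:ℤ) * ((M:ℤ) + M') * (M' * V) := by
    apply mul_le_mul_of_nonneg_left hV
    positivity
  have big : ((M:ℤ) * M') * ((a + b2) * (c + c')) ≤ ((M:ℤ) * M') * ((M + M') * (U + V)) := by
    nlinarith [hkey, hU', hV']
  have hpos : (0:ℤ) < (M:ℤ) * M' := by positivity
  exact le_of_mul_le_mul_left big hpos


theorem count_main (k : ℕ) (hk : 0 < k) (m1 m2 a : ℕ) (hco : m1 * m2 ≤ a * k)
    (B AB : Finset (Fin k → Bool × Bool))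
    (hB : ∀ ω, ω ∈ B ↔ (cnt (yw ω) k = m1 ∧ cnt (fun i => (ω i).2) k = m2
        ∧ cnt (fun i => (ω i).1 && (ω i).2) k = a))
    (hAB : ∀ ω, ω ∈ AB ↔ ω ∈ B ∧ ∀ l ≤ k, m1 * l ≤ k * cnt (yw ω) l
        ∧ m2 * l ≤ k * cnt (fun i => (ω i).2) l) :
    B.card ≤ k ^ 3 * AB.card := by
  classical
  choose R hRlt hRg using fun ω : Fin k → Bool × Bool => cycle (yw ω)
  choose S hSlt hSg using fun ω : Fin k → Bool × Bool => cycle (uw ω)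
  choose T hTlt hTg using fun ω : Fin k → Bool × Bool => cycle (vw ω)
  set F : (Fin k → Bool × Bool) → (Fin k → Bool × Bool) :=
    fun ω => Tmap (R ω) (S ω) (T ω) ω with hF
  -- Step A : F maps B into AB
  have stepA : ∀ ω ∈ B, F ω ∈ AB := by
    intro ω hω
    show Tmap (R ω) (S ω) (T ω) ω ∈ AB
    obtain ⟨hm1, hm2, ha⟩ := (hB ω).1 hω
    have hMM' : (pos (yw ω)).card + (neg (yw ω)).card = k := card_pos_add_card_neg (yw ω)
    have hMeq : m1 = (pos (yw ω)).card := by rw [← hm1, card_pos_eq]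
    have hau : cnt (uw ω) (pos (yw ω)).card = a := by rw [uw_total, ha]
    have hkM : k - (pos (yw ω)).card = (neg (yw ω)).card := by omega
    have hsplitk : m2 = cnt (uw ω) (pos (yw ω)).card + cnt (vw ω) (neg (yw ω)).card := by
      have h := cnt_split ω (le_refl k)
      rw [hm2, card_pos_eq (yw ω), hkM] at h
      exact h
    have hb2 : cnt (vw ω) (neg (yw ω)).card = m2 - a := by omega
    have haM : a ≤ (pos (yw ω)).card := by rw [← hau]; exact cnt_le _ _
    have hbM' : cnt (vw ω) (neg (yw ω)).card ≤ (neg (yw ω)).card := cnt_le _ _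
    -- counts of the image
    have hy1 : cnt (yw (Tmap (R ω) (S ω) (T ω) ω)) k = m1 := by
      rw [yw_Tmap, cnt_rot_total, hm1]
    have hy11 : cnt (fun i => ((Tmap (R ω) (S ω) (T ω) ω) i).1
        && ((Tmap (R ω) (S ω) (T ω) ω) i).2) k = a := by
      rw [← uw_total, cnt_uw_Tmap, card_pos_Tmap, cnt_rot_total, hau]
    have hm2' : m2 = a + cnt (vw ω) (neg (yw ω)).card := by omega
    have hy2 : cnt (fun i => ((Tmap (R ω) (S ω) (T ω) ω) i).2) k = m2 := by
      rw [cnt_split (Tmap (R ω) (S ω) (T ω) ω) (le_refl k), hy1, hMeq, hkM,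
        cnt_uw_Tmap, cnt_vw_Tmap, cnt_rot_total, cnt_rot_total, hau]
      omega
    have hFB : Tmap (R ω) (S ω) (T ω) ω ∈ B := (hB _).2 ⟨hy1, hy2, hy11⟩
    refine (hAB _).2 ⟨hFB, fun l hl => ?_⟩
    have hgood1 : m1 * l ≤ k * cnt (yw (Tmap (R ω) (S ω) (T ω) ω)) l := by
      rw [yw_Tmap]
      have := hRg ω l
      rwa [hm1] at this
    refine ⟨hgood1, ?_⟩
    have hcl : cnt (yw (Tmap (R ω) (S ω) (T ω) ω)) l ≤ l := cnt_le _ _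
    have hcM : cnt (yw (Tmap (R ω) (S ω) (T ω) ω)) l ≤ (pos (yw ω)).card := by
      have h1 : cnt (yw (Tmap (R ω) (S ω) (T ω) ω)) l
          ≤ cnt (yw (Tmap (R ω) (S ω) (T ω) ω)) k := cnt_mono _ hl
      rw [hy1] at h1
      omega
    have hsplit := cnt_split (Tmap (R ω) (S ω) (T ω) ω) hl
    rw [hsplit, cnt_uw_Tmap, cnt_vw_Tmap]
    have hUc : a * cnt (yw (Tmap (R ω) (S ω) (T ω) ω)) l
        ≤ (pos (yw ω)).card * cnt (rotw (S ω) (uw ω)) (cnt (yw (Tmap (R ω) (S ω) (T ω) ω)) l) := by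
      rw [← hau]
      exact hSg ω _
    have hVc : cnt (vw ω) (neg (yw ω)).card * (l - cnt (yw (Tmap (R ω) (S ω) (T ω) ω)) l)
        ≤ (neg (yw ω)).card * cnt (rotw (T ω) (vw ω)) (l - cnt (yw (Tmap (R ω) (S ω) (T ω) ω)) l) :=
      hTg ω _
    have hMl : (pos (yw ω)).card * (cnt (yw (Tmap (R ω) (S ω) (T ω) ω)) l
          + (l - cnt (yw (Tmap (R ω) (S ω) (T ω) ω)) l))
        ≤ ((pos (yw ω)).card + (neg (yw ω)).card) * cnt (yw (Tmap (R ω) (S ω) (T ω) ω)) l := by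
      rw [show cnt (yw (Tmap (R ω) (S ω) (T ω) ω)) l
          + (l - cnt (yw (Tmap (R ω) (S ω) (T ω) ω)) l) = l by omega, hMM', ← hMeq]
      exact hgood1
    have hcoM : (pos (yw ω)).card * (a + cnt (vw ω) (neg (yw ω)).card)
        ≤ a * ((pos (yw ω)).card + (neg (yw ω)).card) := by
      rw [hMM', ← hMeq, ← hm2']
      exact hco
    have hfin := key_arith (pos (yw ω)).card (neg (yw ω)).card a
      (cnt (vw ω) (neg (yw ω)).card) (cnt (yw (Tmap (R ω) (S ω) (T ω) ω)) l)
      (l - cnt (yw (Tmap (R ω) (S ω) (T ω) ω)) l)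
      (cnt (rotw (S ω) (uw ω)) (cnt (yw (Tmap (R ω) (S ω) (T ω) ω)) l))
      (cnt (rotw (T ω) (vw ω)) (l - cnt (yw (Tmap (R ω) (S ω) (T ω) ω)) l))
      hcM haM hbM' hUc hVc hMl hcoM
    rw [show cnt (yw (Tmap (R ω) (S ω) (T ω) ω)) l
        + (l - cnt (yw (Tmap (R ω) (S ω) (T ω) ω)) l) = l by omega, hMM', ← hm2'] at hfin
    calc m2 * l ≤ _ := hfin
    _ = k * (cnt (rotw (S ω) (uw ω)) (cnt (yw (Tmap (R ω) (S ω) (T ω) ω)) l)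
        + cnt (rotw (T ω) (vw ω)) (l - cnt (yw (Tmap (R ω) (S ω) (T ω) ω)) l)) := by ring
  -- Step B : counting
  have hfib : ∀ ω0 ∈ B.image F, (B.filter fun ω => F ω = ω0).card ≤ k ^ 3 := by
    intro ω0 _
    have hcard : ((Finset.range k ×ˢ Finset.range k ×ˢ Finset.range k
        : Finset (ℕ × ℕ × ℕ))).card = k ^ 3 := by
      simp [Finset.card_product]
      ring
    rw [← hcard]
    apply Finset.card_le_card_of_injOn (fun ω => (R ω, S ω, T ω))
    · intro ω hω
      have hMk : (pos (yw ω)).card ≤ k := by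
        calc (pos (yw ω)).card ≤ (Finset.univ : Finset (Fin k)).card := Finset.card_le_univ _
        _ = k := by simp
      have hM'k : (neg (yw ω)).card ≤ k := by
        calc (neg (yw ω)).card ≤ (Finset.univ : Finset (Fin k)).card := Finset.card_le_univ _
        _ = k := by simp
      have h1 : R ω < k := by have := hRlt ω; omega
      have h2 : S ω < k := by have := hSlt ω; omega
      have h3 : T ω < k := by have := hTlt ω; omega
      simp [Finset.mem_product, h1, h2, h3]
    · intro ω hω ω' hω' hcoords
      simp only [Prod.mk.injEq] at hcoords
      obtain ⟨e1, e2, e3⟩ := hcoords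
      have hfω := (Finset.mem_filter.1 hω).2
      have hfω' := (Finset.mem_filter.1 hω').2
      apply Tmap_inj (R ω) (S ω) (T ω)
      calc Tmap (R ω) (S ω) (T ω) ω = F ω := rfl
      _ = ω0 := hfω
      _ = F ω' := hfω'.symm
      _ = Tmap (R ω') (S ω') (T ω') ω' := rfl
      _ = Tmap (R ω) (S ω) (T ω) ω' := by rw [e1, e2, e3]
  have h1 : B.card ≤ k ^ 3 * (B.image F).card := Finset.card_le_mul_card_image B (k ^ 3) hfib
  have h2 : (B.image F) ⊆ AB := Finset.image_subset_iff.2 stepA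
  calc B.card ≤ k ^ 3 * (B.image F).card := h1
  _ ≤ k ^ 3 * AB.card := Nat.mul_le_mul_left _ (Finset.card_le_card h2)


section Measure
open MeasureTheory
variable {k : ℕ}

lemma sum_ite_pre (w : Fin k → Bool) {l : ℕ} (hl : l ≤ k) :
    (∑ i ∈ Finset.univ.filter (fun i : Fin k => (i : ℕ) < l), (if w i then (1:ℝ) else 0))
      = (cnt w l : ℝ) := by
  rw [Finset.sum_boole]
  have : ((Finset.univ.filter (fun i : Fin k => (i : ℕ) < l)).filter
      fun i => w i = true).card = cnt w l := by
    rw [cnt_eq_card w hl]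
    congr 1
    ext z
    simp only [Finset.mem_filter, Finset.mem_univ, true_and, pos]
    try tauto
  rw [this]

lemma sum_ite_total (w : Fin k → Bool) :
    (∑ i : Fin k, (if w i then (1:ℝ) else 0)) = (cnt w k : ℝ) := by
  have h : (Finset.univ.filter fun i : Fin k => (i : ℕ) < k) = Finset.univ :=
    Finset.filter_true_of_mem fun i _ => i.isLt
  rw [← sum_ite_pre w (le_refl k), h]

lemma real_scale (hk : 0 < k) {q : ℝ} {m c l : ℕ} (hm : (m : ℝ) = q * k) :
    (q * l ≤ (c : ℝ)) ↔ (m * l ≤ k * c) := by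
  have hkpos : (0:ℝ) < k := by exact_mod_cast hk
  constructor
  · intro h
    have : (m:ℝ) * l ≤ (k:ℝ) * c := by
      calc (m:ℝ) * l = (q * l) * k := by rw [hm]; ring
      _ ≤ (c:ℝ) * k := mul_le_mul_of_nonneg_right h hkpos.le
      _ = (k:ℝ) * c := by ring
    exact_mod_cast this
  · intro h
    have h2 : (m:ℝ) * l ≤ (k:ℝ) * c := by exact_mod_cast h
    rw [hm] at h2
    have h3 : (k:ℝ) * (q * l) ≤ (k:ℝ) * c := by
      calc (k:ℝ) * (q * l) = q * k * l := by ring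
      _ ≤ (k:ℝ) * c := h2
    exact (mul_le_mul_iff_right₀ hkpos).1 h3

lemma card_fib_tt (ω : Fin k → Bool × Bool) :
    (Finset.univ.filter fun i => ω i = (true, true)).card
      = cnt (fun i => (ω i).1 && (ω i).2) k := by
  rw [card_pos_eq]
  congr 1
  ext i
  simp [pos, Prod.ext_iff, Bool.and_eq_true]

lemma card_fib_t (ω : Fin k → Bool × Bool) :
    (Finset.univ.filter fun i => ω i = (true, true)).card
      + (Finset.univ.filter fun i => ω i = (true, false)).card = cnt (yw ω) k := by
  have key := Finset.card_filter_add_card_filter_not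
    (s := Finset.univ.filter fun i : Fin k => (ω i).1 = true) (p := fun i => (ω i).2 = true)
  have e1 : (Finset.univ.filter fun i : Fin k => (ω i).1 = true).filter
      (fun i => (ω i).2 = true) = Finset.univ.filter fun i => ω i = (true, true) := by
    ext i
    simp only [Finset.mem_filter, Finset.mem_univ, true_and, Prod.ext_iff]
    try tauto
  have e2 : (Finset.univ.filter fun i : Fin k => (ω i).1 = true).filter
      (fun i => ¬ (ω i).2 = true) = Finset.univ.filter fun i => ω i = (true, false) := by
    ext i
    simp only [Finset.mem_filter, Finset.mem_univ, true_and, Prod.ext_iff, Bool.not_eq_true]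
    try tauto
  have e3 : pos (yw ω) = Finset.univ.filter fun i : Fin k => (ω i).1 = true := by
    ext i
    exact Iff.rfl
  rw [e1, e2] at key
  rw [card_pos_eq, e3]
  exact key

lemma card_fib_f (ω : Fin k → Bool × Bool) :
    (Finset.univ.filter fun i => ω i = (true, true)).card
      + (Finset.univ.filter fun i => ω i = (false, true)).card
      = cnt (fun i => (ω i).2) k := by
  have key := Finset.card_filter_add_card_filter_not
    (s := Finset.univ.filter fun i : Fin k => (ω i).2 = true) (p := fun i => (ω i).1 = true)
  have e1 : (Finset.univ.filter fun i : Fin k => (ω i).2 = true).filter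
      (fun i => (ω i).1 = true) = Finset.univ.filter fun i => ω i = (true, true) := by
    ext i
    simp only [Finset.mem_filter, Finset.mem_univ, true_and, Prod.ext_iff]
    try tauto
  have e2 : (Finset.univ.filter fun i : Fin k => (ω i).2 = true).filter
      (fun i => ¬ (ω i).1 = true) = Finset.univ.filter fun i => ω i = (false, true) := by
    ext i
    simp only [Finset.mem_filter, Finset.mem_univ, true_and, Prod.ext_iff, Bool.not_eq_true]
    try tauto
  have e3 : pos (fun i => (ω i).2) = Finset.univ.filter fun i : Fin k => (ω i).2 = true := by
    ext i
    simp [pos]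
  rw [e1, e2] at key
  rw [card_pos_eq, e3]
  exact key

lemma card_fib_all (ω : Fin k → Bool × Bool) :
    (Finset.univ.filter fun i => ω i = (true, true)).card
      + (Finset.univ.filter fun i => ω i = (true, false)).card
      + ((Finset.univ.filter fun i => ω i = (false, true)).card
      + (Finset.univ.filter fun i => ω i = (false, false)).card) = k := by
  have k1 := Finset.card_filter_add_card_filter_not
    (s := (Finset.univ : Finset (Fin k))) (p := fun i => (ω i).1 = true)
  have k2 := Finset.card_filter_add_card_filter_not
    (s := Finset.univ.filter fun i : Fin k => (ω i).1 = true) (p := fun i => (ω i).2 = true)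
  have k3 := Finset.card_filter_add_card_filter_not
    (s := Finset.univ.filter fun i : Fin k => ¬ (ω i).1 = true) (p := fun i => (ω i).2 = true)
  have e1 : (Finset.univ.filter fun i : Fin k => (ω i).1 = true).filter
      (fun i => (ω i).2 = true) = Finset.univ.filter fun i => ω i = (true, true) := by
    ext i; simp only [Finset.mem_filter, Finset.mem_univ, true_and, Prod.ext_iff]; try tauto
  have e2 : (Finset.univ.filter fun i : Fin k => (ω i).1 = true).filter
      (fun i => ¬ (ω i).2 = true) = Finset.univ.filter fun i => ω i = (true, false) := by
    ext i
    simp only [Finset.mem_filter, Finset.mem_univ, true_and, Prod.ext_iff, Bool.not_eq_true]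
    try tauto
  have e3 : (Finset.univ.filter fun i : Fin k => ¬ (ω i).1 = true).filter
      (fun i => (ω i).2 = true) = Finset.univ.filter fun i => ω i = (false, true) := by
    ext i
    simp only [Finset.mem_filter, Finset.mem_univ, true_and, Prod.ext_iff, Bool.not_eq_true]
    try tauto
  have e4 : (Finset.univ.filter fun i : Fin k => ¬ (ω i).1 = true).filter
      (fun i => ¬ (ω i).2 = true) = Finset.univ.filter fun i => ω i = (false, false) := by
    ext i
    simp only [Finset.mem_filter, Finset.mem_univ, true_and, Prod.ext_iff, Bool.not_eq_true]
    try tauto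
  rw [e1, e2] at k2
  rw [e3, e4] at k3
  have huniv : (Finset.univ : Finset (Fin k)).card = k := by simp
  omega

lemma prod_count_measure (μ : Measure (Bool × Bool)) (ω : Fin k → Bool × Bool) :
    (∏ i, μ {ω i}) = ∏ v ∈ (Finset.univ : Finset (Bool × Bool)),
      μ {v} ^ (Finset.univ.filter fun i => ω i = v).card := by
  classical
  rw [← Finset.prod_fiberwise_of_maps_to (g := ω) (fun i _ => Finset.mem_univ (ω i))
    (fun i => μ {ω i})]
  refine Finset.prod_congr rfl fun v _ => ?_
  rw [Finset.prod_congr rfl (fun i hi => ?_), Finset.prod_const]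
  rw [(Finset.mem_filter.1 hi).2]

lemma measure_finset (μ : Measure (Bool × Bool)) [IsProbabilityMeasure μ]
    (S : Finset (Fin k → Bool × Bool)) :
    (Measure.pi fun _ : Fin k => μ) ↑S = ∑ ω ∈ S, ∏ i, μ {ω i} := by
  have hsing : ∀ ω : Fin k → Bool × Bool,
      MeasurableSet ({ω} : Set (Fin k → Bool × Bool)) := by
    intro ω
    rw [← Set.univ_pi_singleton]
    exact MeasurableSet.univ_pi fun i => measurableSet_singleton _
  have hcoe : (↑S : Set (Fin k → Bool × Bool)) = ⋃ ω ∈ S, {ω} := by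
    ext x
    simp
  rw [hcoe, measure_biUnion_finset ?_ fun ω _ => hsing ω]
  · refine Finset.sum_congr rfl fun ω _ => ?_
    rw [← Set.univ_pi_singleton, Measure.pi_pi]
  · intro x _ y _ hxy
    simp only [Function.onFun]
    exact Set.disjoint_singleton.2 hxy

end Measure

end PrefixAux

open PrefixAux in
/-- Conditioned on the total counts (fixing both marginal sums and the count of
double-ones), the probability that all prefix sums of an i.i.d. `{0,1}²` walk stay above
the linear lower bounds `(p₁ l, p₂ l)` is at least `k⁻³`
(stated as `ℙ(A ∩ B) ≥ k⁻³ · ℙ(B)`). -/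
theorem prefix_sums_conditional_lower_bound
    (k : ℕ) (hk : 0 < k) (p p₁ p₂ : ℝ)
    (hp : p ∈ Set.Icc (0:ℝ) 1) (hp1 : p₁ ∈ Set.Icc (0:ℝ) 1) (hp2 : p₂ ∈ Set.Icc (0:ℝ) 1)
    (hpk : ∃ m : ℕ, (m : ℝ) = p * k)
    (hp1k : ∃ m : ℕ, (m : ℝ) = p₁ * k)
    (hp2k : ∃ m : ℕ, (m : ℝ) = p₂ * k)
    (hcorr : p₁ * p₂ ≤ p)
    (μ : Measure (Bool × Bool)) [IsProbabilityMeasure μ] :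
    ((k : ENNReal) ^ 3)⁻¹ *
      (Measure.pi fun _ : Fin k => μ)
        {ω | (∑ i : Fin k, (if (ω i).1 then (1:ℝ) else 0)) = p₁ * k
            ∧ (∑ i : Fin k, (if (ω i).2 then (1:ℝ) else 0)) = p₂ * k
            ∧ (∑ i : Fin k, (if (ω i).1 && (ω i).2 then (1:ℝ) else 0)) = p * k}
    ≤ (Measure.pi fun _ : Fin k => μ)
        {ω | (∀ l ≤ k,
              p₁ * l ≤ ∑ i ∈ Finset.univ.filter (fun i : Fin k => (i : ℕ) < l),
                  (if (ω i).1 then (1:ℝ) else 0)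
            ∧ p₂ * l ≤ ∑ i ∈ Finset.univ.filter (fun i : Fin k => (i : ℕ) < l),
                  (if (ω i).2 then (1:ℝ) else 0))
          ∧ (∑ i : Fin k, (if (ω i).1 then (1:ℝ) else 0)) = p₁ * k
          ∧ (∑ i : Fin k, (if (ω i).2 then (1:ℝ) else 0)) = p₂ * k
          ∧ (∑ i : Fin k, (if (ω i).1 && (ω i).2 then (1:ℝ) else 0)) = p * k} := by
  classical
  obtain ⟨a, hak⟩ := hpk
  obtain ⟨m1, hm1k⟩ := hp1k
  obtain ⟨m2, hm2k⟩ := hp2k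
  have hcornat : m1 * m2 ≤ a * k := by
    have hr : ((m1 * m2 : ℕ) : ℝ) ≤ ((a * k : ℕ) : ℝ) := by
      push_cast
      rw [hm1k, hm2k, hak]
      have hkk : (0:ℝ) ≤ (k:ℝ) * k := by positivity
      nlinarith [mul_le_mul_of_nonneg_right hcorr hkk]
    exact_mod_cast hr
  set Bfin : Finset (Fin k → Bool × Bool) := Finset.univ.filter (fun ω =>
    cnt (yw ω) k = m1 ∧ cnt (fun i => (ω i).2) k = m2
      ∧ cnt (fun i => (ω i).1 && (ω i).2) k = a) with hBfin
  set ABfin : Finset (Fin k → Bool × Bool) := Finset.univ.filter (fun ω =>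
    ω ∈ Bfin ∧ ∀ l ≤ k, m1 * l ≤ k * cnt (yw ω) l
      ∧ m2 * l ≤ k * cnt (fun i => (ω i).2) l) with hABfin
  have hBmem : ∀ ω, ω ∈ Bfin ↔ (cnt (yw ω) k = m1 ∧ cnt (fun i => (ω i).2) k = m2
      ∧ cnt (fun i => (ω i).1 && (ω i).2) k = a) := by
    intro ω
    constructor
    · intro h; exact (Finset.mem_filter.1 h).2
    · intro h; exact Finset.mem_filter.2 ⟨Finset.mem_univ _, h⟩
  have hABmem : ∀ ω, ω ∈ ABfin ↔ ω ∈ Bfin ∧ ∀ l ≤ k, m1 * l ≤ k * cnt (yw ω) l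
      ∧ m2 * l ≤ k * cnt (fun i => (ω i).2) l := by
    intro ω
    constructor
    · intro h; exact (Finset.mem_filter.1 h).2
    · intro h; exact Finset.mem_filter.2 ⟨Finset.mem_univ _, h⟩
  have hsum1 : ∀ ω : Fin k → Bool × Bool,
      (∑ i : Fin k, (if (ω i).1 then (1:ℝ) else 0)) = (cnt (yw ω) k : ℝ) :=
    fun ω => sum_ite_total (yw ω)
  have hsum2 : ∀ ω : Fin k → Bool × Bool,
      (∑ i : Fin k, (if (ω i).2 then (1:ℝ) else 0)) = (cnt (fun i => (ω i).2) k : ℝ) :=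
    fun ω => sum_ite_total (fun i => (ω i).2)
  have hsum11 : ∀ ω : Fin k → Bool × Bool,
      (∑ i : Fin k, (if (ω i).1 && (ω i).2 then (1:ℝ) else 0))
        = (cnt (fun i => (ω i).1 && (ω i).2) k : ℝ) :=
    fun ω => sum_ite_total (fun i => (ω i).1 && (ω i).2)
  have hBiff : ∀ ω : Fin k → Bool × Bool,
      ((∑ i : Fin k, (if (ω i).1 then (1:ℝ) else 0)) = p₁ * k
        ∧ (∑ i : Fin k, (if (ω i).2 then (1:ℝ) else 0)) = p₂ * k
        ∧ (∑ i : Fin k, (if (ω i).1 && (ω i).2 then (1:ℝ) else 0)) = p * k)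
      ↔ ω ∈ Bfin := by
    intro ω
    rw [hBmem ω, hsum1 ω, hsum2 ω, hsum11 ω, ← hm1k, ← hm2k, ← hak]
    constructor
    · rintro ⟨h1, h2, h3⟩
      exact ⟨by exact_mod_cast h1, by exact_mod_cast h2, by exact_mod_cast h3⟩
    · rintro ⟨h1, h2, h3⟩
      exact ⟨by rw [h1], by rw [h2], by rw [h3]⟩
  have hSetB : {ω : Fin k → Bool × Bool |
        (∑ i : Fin k, (if (ω i).1 then (1:ℝ) else 0)) = p₁ * k
        ∧ (∑ i : Fin k, (if (ω i).2 then (1:ℝ) else 0)) = p₂ * k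
        ∧ (∑ i : Fin k, (if (ω i).1 && (ω i).2 then (1:ℝ) else 0)) = p * k} = ↑Bfin := by
    ext ω
    rw [Set.mem_setOf_eq, Finset.mem_coe]
    exact hBiff ω
  have hSetAB : {ω : Fin k → Bool × Bool | (∀ l ≤ k,
          p₁ * l ≤ ∑ i ∈ Finset.univ.filter (fun i : Fin k => (i : ℕ) < l),
              (if (ω i).1 then (1:ℝ) else 0)
        ∧ p₂ * l ≤ ∑ i ∈ Finset.univ.filter (fun i : Fin k => (i : ℕ) < l),
              (if (ω i).2 then (1:ℝ) else 0))
      ∧ (∑ i : Fin k, (if (ω i).1 then (1:ℝ) else 0)) = p₁ * k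
      ∧ (∑ i : Fin k, (if (ω i).2 then (1:ℝ) else 0)) = p₂ * k
      ∧ (∑ i : Fin k, (if (ω i).1 && (ω i).2 then (1:ℝ) else 0)) = p * k} = ↑ABfin := by
    ext ω
    rw [Set.mem_setOf_eq, Finset.mem_coe, hABmem ω]
    have hiffpre : (∀ l ≤ k,
          p₁ * l ≤ ∑ i ∈ Finset.univ.filter (fun i : Fin k => (i : ℕ) < l),
              (if (ω i).1 then (1:ℝ) else 0)
        ∧ p₂ * l ≤ ∑ i ∈ Finset.univ.filter (fun i : Fin k => (i : ℕ) < l),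
              (if (ω i).2 then (1:ℝ) else 0))
        ↔ (∀ l ≤ k, m1 * l ≤ k * cnt (yw ω) l
            ∧ m2 * l ≤ k * cnt (fun i => (ω i).2) l) := by
      refine forall₂_congr fun l hl => ?_
      rw [show (∑ i ∈ Finset.univ.filter (fun i : Fin k => (i : ℕ) < l),
            (if (ω i).1 then (1:ℝ) else 0)) = (cnt (yw ω) l : ℝ) from sum_ite_pre (yw ω) hl,
        show (∑ i ∈ Finset.univ.filter (fun i : Fin k => (i : ℕ) < l),
            (if (ω i).2 then (1:ℝ) else 0)) = (cnt (fun i => (ω i).2) l : ℝ) from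
          sum_ite_pre (fun i => (ω i).2) hl]
      exact and_congr (real_scale hk hm1k) (real_scale hk hm2k)
    constructor
    · rintro ⟨hpre, hb⟩
      exact ⟨(hBiff ω).1 hb, hiffpre.1 hpre⟩
    · rintro ⟨hb, hpre⟩
      exact ⟨hiffpre.2 hpre, (hBiff ω).2 hb⟩
  rw [hSetB, hSetAB]
  rcases Finset.eq_empty_or_nonempty Bfin with hBe | ⟨ω₀, hω₀⟩
  · rw [hBe]
    simp
  · have hsubAB : ABfin ⊆ Bfin := fun ω h => ((hABmem ω).1 h).1
    have hWeq : ∀ ω ∈ Bfin, (∏ i, μ {ω i}) = ∏ i, μ {ω₀ i} := by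
      intro ω hω
      obtain ⟨hb1, hb2, hb3⟩ := (hBmem ω).1 hω
      obtain ⟨hc1, hc2, hc3⟩ := (hBmem ω₀).1 hω₀
      rw [prod_count_measure, prod_count_measure]
      refine Finset.prod_congr rfl fun v _ => ?_
      congr 1
      have t1 := card_fib_tt ω
      have t2 := card_fib_t ω
      have t3 := card_fib_f ω
      have t4 := card_fib_all ω
      have s1 := card_fib_tt ω₀
      have s2 := card_fib_t ω₀
      have s3 := card_fib_f ω₀
      have s4 := card_fib_all ω₀
      rw [hb3] at t1
      rw [hb1] at t2
      rw [hb2] at t3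
      rw [hc3] at s1
      rw [hc1] at s2
      rw [hc2] at s3
      rcases v with ⟨b1, b2⟩
      cases b1 <;> cases b2 <;> omega
    have hmB : (Measure.pi fun _ : Fin k => μ) ↑Bfin
        = (Bfin.card : ENNReal) * ∏ i, μ {ω₀ i} := by
      rw [measure_finset μ Bfin, Finset.sum_congr rfl hWeq, Finset.sum_const, nsmul_eq_mul]
    have hmAB : (Measure.pi fun _ : Fin k => μ) ↑ABfin
        = (ABfin.card : ENNReal) * ∏ i, μ {ω₀ i} := by
      rw [measure_finset μ ABfin,
        Finset.sum_congr rfl (fun ω h => hWeq ω (hsubAB h)), Finset.sum_const, nsmul_eq_mul]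
    rw [hmB, hmAB]
    have hcount : Bfin.card ≤ k ^ 3 * ABfin.card :=
      count_main k hk m1 m2 a hcornat Bfin ABfin hBmem hABmem
    have hk3 : ((k : ENNReal) ^ 3) ≠ 0 :=
      pow_ne_zero _ (Nat.cast_ne_zero.2 hk.ne')
    have hk3top : ((k : ENNReal) ^ 3) ≠ ⊤ :=
      ENNReal.pow_ne_top (ENNReal.natCast_ne_top k)
    calc ((k : ENNReal) ^ 3)⁻¹ * ((Bfin.card : ENNReal) * ∏ i, μ {ω₀ i})
        ≤ ((k : ENNReal) ^ 3)⁻¹ * (((k ^ 3 * ABfin.card : ℕ) : ENNReal) * ∏ i, μ {ω₀ i}) :=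
          mul_le_mul_right (mul_le_mul_left (by exact_mod_cast hcount) _) _
      _ = (ABfin.card : ENNReal) * ∏ i, μ {ω₀ i} := by
          push_cast
          rw [← mul_assoc, ← mul_assoc, ENNReal.inv_mul_cancel hk3 hk3top, one_mul]
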